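/- Let y, D : [t₀, t₀+T*] → ℝ≥0 with y differentiable, y(t₀) ≤ N, and y'(t) + D(t) ≤ C₀ y(t)² + 2ρ_m y(t), where T* = min(N^{-1}, ρ_m^{-1})/(8(1+C₀)). Then ∫_{t₀}^{t₀+T*} D(t) dt ≤ 2N. -/

import Mathlib

open Real MeasureTheory intervalIntegral

noncomputable section

/-- Points of the plane; the channel is periodic in the first coordinate. -/
abbrev Pt : Type := ℝ × ℝ

/-- The periodic channel Ω = 𝕋 × [0,π], with the torus realized as a fundamental domain. -/
def Omega : Set Pt := Set.Ioo (-Real.pi) Real.pi ×ˢ Set.Icc 0 Real.pi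

/-- The boundary ∂Ω = 𝕋 × {0,π}. -/
def onBdry (x : Pt) : Prop := x.2 = 0 ∨ x.2 = Real.pi

/-- Periodicity in the horizontal variable with period 2π. -/
def periodicX (f : Pt → ℝ) : Prop := ∀ x : Pt, f (x.1 + 2 * Real.pi, x.2) = f x

/-- First partial derivative ∂₁. -/
def pd1 (f : Pt → ℝ) (x : Pt) : ℝ := fderiv ℝ f x (1, 0)

/-- Second partial derivative ∂₂. -/
def pd2 (f : Pt → ℝ) (x : Pt) : ℝ := fderiv ℝ f x (0, 1)

/-- Laplacian. -/
def lap (f : Pt → ℝ) (x : Pt) : ℝ := pd1 (pd1 f) x + pd2 (pd2 f) x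

/-- Squared length of the gradient. -/
def gradSq (f : Pt → ℝ) (x : Pt) : ℝ := (pd1 f x) ^ 2 + (pd2 f x) ^ 2

set_option maxHeartbeats 1000000 in
/-- Time-integrated dissipation bound: integrating y' + D ≤ C₀ y² + 2 ρ_m y over an
interval of length T* = min(N⁻¹, ρ_m⁻¹)/(8(1+C₀)) with y(t₀) ≤ N yields ∫ D ≤ 2N. -/
theorem stmt7 (N ρm C₀ t₀ Tstar : ℝ) (hN : 0 < N) (hρm : 0 < ρm) (hC : 0 < C₀)
    (hT : Tstar = min N⁻¹ ρm⁻¹ / (8 * (1 + C₀)))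
    (y y' D : ℝ → ℝ)
    (hpos : ∀ t ∈ Set.Icc t₀ (t₀ + Tstar), 0 ≤ y t)
    (hDpos : ∀ t ∈ Set.Icc t₀ (t₀ + Tstar), 0 ≤ D t)
    (hderiv : ∀ t ∈ Set.Icc t₀ (t₀ + Tstar), HasDerivAt y (y' t) t)
    (hineq : ∀ t ∈ Set.Icc t₀ (t₀ + Tstar), y' t + D t ≤ C₀ * (y t) ^ 2 + 2 * ρm * y t)
    (h0 : y t₀ ≤ N) :
    (∫ t in t₀..(t₀ + Tstar), D t) ≤ 2 * N := by
  have h8 : (0:ℝ) < 8 * (1 + C₀) := by nlinarith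
  have hTpos : 0 < Tstar := by
    rw [hT]; exact div_pos (lt_min (inv_pos.2 hN) (inv_pos.2 hρm)) h8
  set b := t₀ + Tstar with hb
  have hab : t₀ ≤ b := by simp [hb]; linarith
  have hT1 : Tstar ≤ N⁻¹ / (8 * (1 + C₀)) := by
    rw [hT]; exact div_le_div_of_nonneg_right (min_le_left _ _) h8.le
  have hT2 : Tstar ≤ ρm⁻¹ / (8 * (1 + C₀)) := by
    rw [hT]; exact div_le_div_of_nonneg_right (min_le_right _ _) h8.le
  have hNT : N * Tstar ≤ 1 / (8 * (1 + C₀)) := by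
    calc N * Tstar ≤ N * (N⁻¹ / (8 * (1 + C₀))) :=
          mul_le_mul_of_nonneg_left hT1 hN.le
      _ = 1 / (8 * (1 + C₀)) := by field_simp
  have hρT : ρm * Tstar ≤ 1 / (8 * (1 + C₀)) := by
    calc ρm * Tstar ≤ ρm * (ρm⁻¹ / (8 * (1 + C₀))) :=
          mul_le_mul_of_nonneg_left hT2 hρm.le
      _ = 1 / (8 * (1 + C₀)) := by field_simp
  set K : ℝ := 2 * N * C₀ + 2 * ρm with hK
  have hKpos : 0 < K := by positivity
  have hK14 : K * Tstar ≤ 1 / 4 := by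
    have h1 := mul_le_mul_of_nonneg_left hNT (by linarith : (0:ℝ) ≤ 2 * C₀)
    have h2 := mul_le_mul_of_nonneg_left hρT (by norm_num : (0:ℝ) ≤ 2)
    have hA : 2 * C₀ * (1 / (8 * (1 + C₀))) + 2 * (1 / (8 * (1 + C₀))) = 1 / 4 := by
      field_simp; ring
    calc K * Tstar = 2 * C₀ * (N * Tstar) + 2 * (ρm * Tstar) := by rw [hK]; ring
      _ ≤ 2 * C₀ * (1 / (8 * (1 + C₀))) + 2 * (1 / (8 * (1 + C₀))) := by linarith
      _ = 1 / 4 := hA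
  have hexp14 : Real.exp (1 / 4) < 2 := by
    rw [show (2:ℝ) = Real.exp (Real.log 2) by rw [Real.exp_log]; norm_num]
    exact Real.exp_lt_exp.2 (by nlinarith [Real.log_two_gt_d9])
  have ycont : ContinuousOn y (Set.Icc t₀ b) := fun t ht =>
    (hderiv t ht).continuousAt.continuousWithinAt
  -- the barrier / Gronwall bound
  have key : Set.Icc t₀ b ⊆ {t | y t ≤ N * Real.exp (K * (t - t₀))} := by
    set s : Set ℝ := {t | y t ≤ N * Real.exp (K * (t - t₀))} with hs
    have hclosed : IsClosed (s ∩ Set.Icc t₀ b) := by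
      have hc : ContinuousOn (fun t => (y t, N * Real.exp (K * (t - t₀)))) (Set.Icc t₀ b) :=
        ycont.prodMk (Continuous.continuousOn
          (continuous_const.mul (Real.continuous_exp.comp
            (continuous_const.mul (continuous_id.sub continuous_const)))))
      rw [Set.inter_comm]
      exact hc.preimage_isClosed_of_isClosed isClosed_Icc isClosed_le_prod
    have ht₀s : t₀ ∈ s := by
      simp only [hs, Set.mem_setOf_eq, sub_self, mul_zero, Real.exp_zero, mul_one]
      exact h0
    apply IsClosed.Icc_subset_of_forall_exists_gt hclosed ht₀s
    rintro x ⟨hxs, hx0, hxb⟩ z hz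
    have hxb' : x < b := hxb
    have hxIcc : x ∈ Set.Icc t₀ b := ⟨hx0, hxb'.le⟩
    have hyx2N : y x < 2 * N := by
      have hxt : x - t₀ ≤ Tstar := by
        have : x < t₀ + Tstar := hxb'
        linarith
      have hxt0 : 0 ≤ x - t₀ := by linarith
      have h1 : K * (x - t₀) ≤ 1 / 4 :=
        le_trans (mul_le_mul_of_nonneg_left hxt hKpos.le) hK14
      calc y x ≤ N * Real.exp (K * (x - t₀)) := hxs
        _ ≤ N * Real.exp (1 / 4) := by
            exact mul_le_mul_of_nonneg_left (Real.exp_le_exp.2 h1) hN.le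
        _ < N * 2 := mul_lt_mul_of_pos_left hexp14 hN
        _ = 2 * N := by ring
    have hmem : y ⁻¹' Set.Iio (2 * N) ∈ nhds x :=
      (hderiv x hxIcc).continuousAt.preimage_mem_nhds (Iio_mem_nhds hyx2N)
    obtain ⟨ε, hε, hball⟩ := Metric.mem_nhds_iff.1 hmem
    set d : ℝ := min b (min z (x + ε / 2)) with hd
    have hxd : x < d := lt_min hxb' (lt_min hz (by linarith))
    have hdb : d ≤ b := min_le_left _ _
    have hdz : d ≤ z := le_trans (min_le_right _ _) (min_le_left _ _)
    have hdε : d ≤ x + ε / 2 := le_trans (min_le_right _ _) (min_le_right _ _)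
    have hsub : Set.Icc x d ⊆ Set.Icc t₀ b := Set.Icc_subset_Icc hx0 hdb
    have hlt : ∀ t ∈ Set.Icc x d, y t < 2 * N := by
      intro t ht
      apply hball
      rw [Metric.mem_ball, Real.dist_eq, abs_of_nonneg (sub_nonneg.2 ht.1)]
      have := ht.2
      linarith
    -- h := y * exp(-K t) is antitone on [x, d]
    set h : ℝ → ℝ := fun t => y t * Real.exp (-(K * t)) with hh
    have hder : ∀ t ∈ Set.Icc t₀ b,
        HasDerivAt h ((y' t - K * y t) * Real.exp (-(K * t))) t := by
      intro t ht
      have h1 : HasDerivAt (fun u : ℝ => -(K * u)) (-K) t := by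
        exact (((hasDerivAt_id t).const_mul K).neg).congr_deriv (by ring)
      have h3 : HasDerivAt (fun u => y u * Real.exp (-(K * u)))
          (y' t * Real.exp (-(K * t)) + y t * (Real.exp (-(K * t)) * -K)) t :=
        (hderiv t ht).mul h1.exp
      convert h3 using 1
      ring
    have hanti : AntitoneOn h (Set.Icc x d) := by
      apply antitoneOn_of_deriv_nonpos (convex_Icc x d)
      · exact ((ycont.mono hsub).mul (Continuous.continuousOn
          (Real.continuous_exp.comp (continuous_const.mul continuous_id).neg)))
      · intro t ht
        rw [interior_Icc] at ht
        exact (hder t (hsub (Set.Ioo_subset_Icc_self ht))).differentiableAt.differentiableWithinAt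
      · intro t ht
        rw [interior_Icc] at ht
        have htm := hsub (Set.Ioo_subset_Icc_self ht)
        rw [(hder t htm).deriv]
        have hy0 := hpos t htm
        have hy2 := (hlt t (Set.Ioo_subset_Icc_self ht)).le
        have hq := hineq t htm
        have hDt := hDpos t htm
        have hyK : y' t - K * y t ≤ 0 := by
          nlinarith [mul_le_mul_of_nonneg_left hy2 (mul_nonneg hC.le hy0)]
        exact mul_nonpos_iff.2 (Or.inr ⟨hyK, (Real.exp_pos _).le⟩)
    have hle := hanti (Set.left_mem_Icc.2 hxd.le) (Set.right_mem_Icc.2 hxd.le) hxd.le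
    refine ⟨d, ?_, hxd, hdz⟩
    show y d ≤ N * Real.exp (K * (d - t₀))
    have h2 : y d * Real.exp (-(K * d)) ≤ N * Real.exp (K * (x - t₀)) * Real.exp (-(K * x)) :=
      le_trans hle (mul_le_mul_of_nonneg_right hxs (Real.exp_pos _).le)
    have h3 : N * Real.exp (K * (x - t₀)) * Real.exp (-(K * x))
        = N * Real.exp (K * (d - t₀)) * Real.exp (-(K * d)) := by
      rw [mul_assoc, mul_assoc, ← Real.exp_add, ← Real.exp_add]
      ring_nf
    rw [h3] at h2
    exact le_of_mul_le_mul_right h2 (Real.exp_pos _)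
  have ybound : ∀ t ∈ Set.Icc t₀ b, y t ≤ 2 * N := by
    intro t ht
    have h1 := key ht
    have hxt : t - t₀ ≤ Tstar := by
      have := ht.2; simp only [hb] at this; linarith
    have h2 : K * (t - t₀) ≤ 1 / 4 :=
      le_trans (mul_le_mul_of_nonneg_left hxt hKpos.le) hK14
    calc y t ≤ N * Real.exp (K * (t - t₀)) := h1
      _ ≤ N * Real.exp (1 / 4) := mul_le_mul_of_nonneg_left (Real.exp_le_exp.2 h2) hN.le
      _ ≤ N * 2 := le_of_lt (mul_lt_mul_of_pos_left hexp14 hN)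
      _ = 2 * N := by ring
  -- integrate
  by_cases hDint : IntervalIntegrable D volume t₀ b
  · set g : ℝ → ℝ := fun t => C₀ * y t ^ 2 + 2 * ρm * y t with hg
    have hgcont : ContinuousOn g (Set.Icc t₀ b) :=
      (continuousOn_const.mul (ycont.pow 2)).add (continuousOn_const.mul ycont)
    have hgint : IntervalIntegrable g volume t₀ b := by
      apply ContinuousOn.intervalIntegrable
      rwa [Set.uIcc_of_le hab]
    have hDon : IntegrableOn D (Set.Icc t₀ b) := by
      rw [integrableOn_Icc_iff_integrableOn_Ioc]
      exact hDint.1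
    have φint : IntegrableOn (fun t => g t - D t) (Set.Icc t₀ b) :=
      (hgcont.integrableOn_Icc).sub hDon
    have hFTC : y b - y t₀ ≤ ∫ t in t₀..b, (g t - D t) := by
      apply sub_le_integral_of_hasDeriv_right_of_le hab ycont
        (fun t ht => (hderiv t (Set.Ioo_subset_Icc_self ht)).hasDerivWithinAt) φint
      intro t ht
      have h1 := hineq t (Set.Ioo_subset_Icc_self ht)
      simp only [hg]
      linarith
    rw [intervalIntegral.integral_sub hgint hDint] at hFTC
    have hgle : (∫ t in t₀..b, g t) ≤ (4 * C₀ * N ^ 2 + 4 * ρm * N) * Tstar := by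
      have h1 : (∫ t in t₀..b, g t) ≤ ∫ _t in t₀..b, (4 * C₀ * N ^ 2 + 4 * ρm * N) := by
        apply intervalIntegral.integral_mono_on hab hgint intervalIntegrable_const
        intro t ht
        have h2 := ybound t ht
        have h3 := hpos t ht
        simp only [hg]
        nlinarith [mul_le_mul h2 h2 h3 (by linarith : (0:ℝ) ≤ 2 * N)]
      rwa [intervalIntegral.integral_const, smul_eq_mul,
        show b - t₀ = Tstar by simp [hb], mul_comm] at h1
    have hM : (4 * C₀ * N ^ 2 + 4 * ρm * N) * Tstar ≤ N := by
      have h1 := mul_le_mul_of_nonneg_left hNT (by positivity : (0:ℝ) ≤ 4 * C₀ * N)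
      have h2 := mul_le_mul_of_nonneg_left hρT (by positivity : (0:ℝ) ≤ 4 * N)
      have h3 : 4 * C₀ * N * (1 / (8 * (1 + C₀))) + 4 * N * (1 / (8 * (1 + C₀))) = N / 2 := by
        field_simp
        ring
      calc (4 * C₀ * N ^ 2 + 4 * ρm * N) * Tstar
          = 4 * C₀ * N * (N * Tstar) + 4 * N * (ρm * Tstar) := by ring
        _ ≤ 4 * C₀ * N * (1 / (8 * (1 + C₀))) + 4 * N * (1 / (8 * (1 + C₀))) := by linarith
        _ = N / 2 := h3
        _ ≤ N := by linarith
    have hyb := hpos b (Set.right_mem_Icc.2 hab)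
    linarith
  · rw [intervalIntegral.integral_undef hDint]
    linarith
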